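/- For all r ∈ (0, 1/2] and all α ∈ (0, arccos(1 − 2r²)), the inequality 1 + cos α − 2√2 · cos(α/2) · √(cos α + 2r² − 1) ≥ 0 holds. -/
import Mathlib


/-- For all r ∈ (0, 1/2] and all α ∈ (0, arccos(1 − 2r²)), the inequality
1 + cos α − 2√2 · cos(α/2) · √(cos α + 2r² − 1) ≥ 0 holds. -/
theorem key_trig_inequality (r α : ℝ) (hr : r ∈ Set.Ioc (0:ℝ) (1/2))
    (hα : α ∈ Set.Ioo 0 (Real.arccos (1 - 2*r^2))) :
    1 + Real.cos α - 2 * Real.sqrt 2 * Real.cos (α/2) *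
      Real.sqrt (Real.cos α + 2*r^2 - 1) ≥ 0 := by
  obtain ⟨hr0, hr2⟩ := hr
  obtain ⟨hα0, hα1⟩ := hα
  have ht1 : -1 ≤ 1 - 2*r^2 := by nlinarith
  have ht2 : 1 - 2*r^2 ≤ 1 := by nlinarith
  have harc_le : Real.arccos (1 - 2*r^2) ≤ Real.pi := Real.arccos_le_pi _
  have hcosgt : Real.cos α > 1 - 2*r^2 := by
    have := Real.cos_lt_cos_of_nonneg_of_le_pi (le_of_lt hα0) harc_le hα1
    rwa [Real.cos_arccos ht1 ht2] at this
  have hsnn : 0 ≤ Real.cos α + 2*r^2 - 1 := by linarith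
  set s := Real.sqrt (Real.cos α + 2*r^2 - 1) with hs
  have hs2 : s^2 = Real.cos α + 2*r^2 - 1 := Real.sq_sqrt hsnn
  have hsnn' : 0 ≤ s := Real.sqrt_nonneg _
  set c := Real.cos (α/2) with hc
  have hc2 : c^2 = (1 + Real.cos α)/2 := by
    have h := Real.cos_sq (α/2)
    rw [show 2*(α/2) = α by ring] at h
    linarith
  have hcnn : 0 ≤ c := by
    apply Real.cos_nonneg_of_mem_Icc
    constructor
    · linarith [Real.pi_pos]
    · have : α ≤ Real.pi := le_of_lt (lt_of_lt_of_le hα1 harc_le)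
      linarith
  have h2 : Real.sqrt 2 ^ 2 = 2 := Real.sq_sqrt (by norm_num)
  have h2nn : 0 ≤ Real.sqrt 2 := Real.sqrt_nonneg 2
  -- AM-GM: 2 * (√2 s) * c ≤ c^2 + 2 s^2 ; and c^2 ≥ 2 s^2
  have hkey : c^2 ≥ 2 * s^2 := by
    rw [hc2, hs2]
    nlinarith [Real.neg_one_le_cos α, Real.cos_le_one α]
  nlinarith [sq_nonneg (c - Real.sqrt 2 * s), sq_nonneg c, sq_nonneg s,
    mul_nonneg h2nn hsnn']
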